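/- Let H be a group of cofinality ≤ ω, i.e. H is the union of a strictly increasing sequence (H_n)_{n∈ℕ} of proper subgroups. Then for every infinite subgroup G ≤ H there exists a subgroup K with G ≤ K ≤ H, |K| = |G|, and K is of cofinality ≤ ω, i.e. K is the union of a strictly increasing sequence of proper subgroups of K. -/

import Mathlib

open Cardinal

/-- The cardinality of the subgroup closure of an infinite set is at most
the cardinality of the set. -/
theorem mk_subgroup_closure_le {H : Type*} [Group H] (s : Set H) [Infinite s] :
    #(Subgroup.closure s) ≤ #s := by
  have h1 : #(Subgroup.closure s) ≤ #(FreeGroup s) := by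
    have e : (FreeGroup.lift (Subtype.val : s → H)).range = Subgroup.closure s := by
      rw [FreeGroup.range_lift_eq_closure, Subtype.range_coe]
    calc #(Subgroup.closure s) = #((FreeGroup.lift (Subtype.val : s → H)).range) := by rw [e]
    _ ≤ #(FreeGroup s) := mk_le_of_surjective (MonoidHom.rangeRestrict_surjective _)
  refine h1.trans ?_
  have h2 : #(FreeGroup s) ≤ #(List (s × Bool)) :=
    mk_le_of_surjective Quot.mk_surjective
  refine h2.trans ?_
  rw [mk_list_eq_mk, mk_prod]
  simp only [lift_id, mk_bool, lift_two, lift_uzero]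
  calc #s * 2 ≤ #s * ℵ₀ := by
        gcongr; exact (nat_lt_aleph0 2).le
    _ = #s := mul_aleph0_eq (aleph0_le_mk s)

/-- A group has cofinality `≤ ω` if it is the union of a strictly increasing
sequence of proper subgroups. -/
def CofinalityLeOmega (G : Type*) [Group G] : Prop :=
  ∃ Hn : ℕ → Subgroup G, StrictMono Hn ∧ (∀ n, Hn n ≠ ⊤) ∧
    ∀ x : G, ∃ n, x ∈ Hn n

/-- The class of groups of cofinality `≤ ω` is bountiful. -/
theorem cofinality_le_omega_bountiful {H : Type*} [Group H]
    (hH : CofinalityLeOmega H) :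
    ∀ G : Subgroup H, Infinite G →
      ∃ K : Subgroup H, G ≤ K ∧ Cardinal.mk K = Cardinal.mk G ∧
        CofinalityLeOmega K := by
  intro G hG
  obtain ⟨Hn, hmono, hproper, hcover⟩ := hH
  -- pick witnesses of strictness of the chain
  have hx : ∀ n, ∃ y : H, y ∈ Hn (n + 1) ∧ y ∉ Hn n := fun n =>
    SetLike.exists_of_lt (hmono (Nat.lt_succ_self n))
  choose x hx1 hx2 using hx
  set s : Set H := ↑G ∪ Set.range x with hs
  have hsinf : Infinite s :=
    Set.infinite_coe_iff.mpr
      (Set.Infinite.mono Set.subset_union_left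
        (Set.infinite_coe_iff.mp hG))
  set K : Subgroup H := Subgroup.closure s with hK
  have hGK : G ≤ K := fun g hg => Subgroup.subset_closure (Or.inl hg)
  have hxK : ∀ n, x n ∈ K := fun n => Subgroup.subset_closure (Or.inr ⟨n, rfl⟩)
  refine ⟨K, hGK, ?_, ?_⟩
  · -- cardinality
    apply le_antisymm
    · refine (mk_subgroup_closure_le s).trans ?_
      have h1 : #s ≤ #(↑G : Set H) + #(Set.range x) := mk_union_le _ _
      have h2 : #(Set.range x) ≤ ℵ₀ := @mk_le_aleph0 _ (Set.countable_range x).to_subtype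
      have h3 : #(↑G : Set H) = #G := rfl
      calc #s ≤ #G + ℵ₀ := h1.trans (by rw [h3]; exact add_le_add le_rfl h2)
        _ = #G := add_eq_left (aleph0_le_mk G) (aleph0_le_mk G)
    · exact mk_le_mk_of_subset hGK
  · -- cofinality of K
    refine ⟨fun n => Subgroup.comap K.subtype (Hn n), ?_, ?_, ?_⟩
    · apply strictMono_nat_of_lt_succ
      intro n
      refine lt_of_le_of_ne (Subgroup.comap_mono (hmono (Nat.lt_succ_self n)).le) ?_
      intro h
      have : (⟨x n, hxK n⟩ : K) ∈ Subgroup.comap K.subtype (Hn (n + 1)) := by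
        simpa [Subgroup.mem_comap, Subgroup.mem_subgroupOf] using hx1 n
      rw [← h] at this
      exact hx2 n (by simpa [Subgroup.mem_comap, Subgroup.mem_subgroupOf] using this)
    · intro n h
      have : (⟨x n, hxK n⟩ : K) ∈ (fun n => Subgroup.comap K.subtype (Hn n)) n :=
        h ▸ Subgroup.mem_top _
      exact hx2 n (by simpa [Subgroup.mem_comap, Subgroup.mem_subgroupOf] using this)
    · intro k
      obtain ⟨n, hn⟩ := hcover (k : H)
      exact ⟨n, by simpa [Subgroup.mem_comap, Subgroup.mem_subgroupOf] using hn⟩
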